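/- Let K = closure(B₂ \ B₁) ⊂ ℝ^N (the closed annulus with radii 1 and 2 centered at the origin), let J ∈ L¹(ℝ^N) be non-negative with unit mass and supp(J) ⊆ B_{1/2}, and let f : [0,1] → ℝ satisfy f(0) = f(1) = 0. Then the function u defined on ℝ^N \ K by u(x) = 1 for x ∈ ℝ^N \ B₂ and u(x) = 0 for x ∈ closure(B₁) satisfies ∫_{ℝ^N\K} J(x−y)(u(y)−u(x)) dy + f(u(x)) = 0 for every x ∈ ℝ^N \ K, and u(x) → 1 as |x| → ∞, yet u is not identically 1. -/
import Mathlib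


open MeasureTheory Filter Set Metric

/-- Counterexample on the annulus: with `K = closure(B₂ \ B₁)`, `supp J ⊆ B_{1/2}`,
`f(0) = f(1) = 0`, the function `u = 0` on `closure B₁` and `u = 1` outside `B₂`
solves the nonlocal equation on `ℝ^N \ K`, tends to `1` at infinity, but is not
identically `1`. -/
theorem annulus_counterexample
    {N : ℕ} (hN : 1 ≤ N)
    (K : Set (EuclideanSpace ℝ (Fin N)))
    (hKdef : K = closure (ball (0 : EuclideanSpace ℝ (Fin N)) 2 \
      ball (0 : EuclideanSpace ℝ (Fin N)) 1))
    (J : EuclideanSpace ℝ (Fin N) → ℝ) (hJint : Integrable J) (hJ0 : ∀ z, 0 ≤ J z)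
    (hJmass : ∫ z, J z = 1)
    (hJsupp : Function.support J ⊆ ball (0 : EuclideanSpace ℝ (Fin N)) (1/2))
    (f : ℝ → ℝ) (hf0 : f 0 = 0) (hf1 : f 1 = 0)
    (u : EuclideanSpace ℝ (Fin N) → ℝ)
    (hu : ∀ x, u x = if ‖x‖ ≤ 1 then 0 else 1) :
    (∀ x ∈ Kᶜ, (∫ y in Kᶜ, J (x - y) * (u y - u x)) + f (u x) = 0) ∧
      Tendsto u (cocompact (EuclideanSpace ℝ (Fin N))) (nhds 1) ∧
      ¬ (∀ x ∈ Kᶜ, u x = 1) := by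
  -- K contains the annulus S and sphere 2; K avoids ball 1
  have hS : ball (0 : EuclideanSpace ℝ (Fin N)) 2 \ ball 0 1 ⊆ K := by
    rw [hKdef]; exact subset_closure
  have hK1 : K ⊆ (ball (0 : EuclideanSpace ℝ (Fin N)) 1)ᶜ := by
    rw [hKdef]
    exact closure_minimal (fun x hx => hx.2) (isOpen_ball.isClosed_compl)
  have hsphere : ∀ x : EuclideanSpace ℝ (Fin N), ‖x‖ = 2 → x ∈ K := by
    intro x hx
    rw [hKdef, Metric.mem_closure_iff]
    intro ε hε
    refine ⟨(max (1/2) (1 - ε/4)) • x, ?_, ?_⟩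
    · have ht1 : (1:ℝ)/2 ≤ max (1/2) (1 - ε/4) := le_max_left _ _
      have ht2 : max (1/2) (1 - ε/4) < 1 := by
        apply max_lt <;> linarith
      have ht0 : 0 ≤ max (1/2) (1 - ε/4) := by linarith
      constructor
      · rw [mem_ball, dist_zero_right, norm_smul, Real.norm_eq_abs,
          abs_of_nonneg ht0, hx]
        linarith
      · rw [mem_ball, dist_zero_right, norm_smul, Real.norm_eq_abs,
          abs_of_nonneg ht0, hx]
        push_neg
        linarith
    · have : dist x ((max (1/2) (1 - ε/4)) • x) = ‖x - (max (1/2) (1 - ε/4)) • x‖ :=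
        dist_eq_norm _ _
      rw [this]
      have : x - (max (1/2) (1 - ε/4)) • x = (1 - max (1/2) (1 - ε/4)) • x := by
        rw [sub_smul, one_smul]
      rw [this, norm_smul, Real.norm_eq_abs, hx]
      have ht2 : max (1/2) (1 - ε/4) < 1 := by apply max_lt <;> linarith
      have ht3 : 1 - ε/4 ≤ max (1/2) (1 - ε/4) := le_max_right _ _
      rw [abs_of_nonneg (by linarith)]
      linarith
  -- dichotomy on Kᶜ
  have hdich : ∀ x : EuclideanSpace ℝ (Fin N), x ∈ Kᶜ → ‖x‖ < 1 ∨ 2 < ‖x‖ := by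
    intro x hx
    by_contra h
    push_neg at h
    obtain ⟨h1, h2⟩ := h
    rcases eq_or_lt_of_le h2 with heq | hlt
    · exact hx (hsphere x heq)
    · exact hx (hS ⟨by simpa [mem_ball, dist_zero_right] using hlt,
        by simp [mem_ball, dist_zero_right]; exact h1⟩)
  have hu0 : ∀ x : EuclideanSpace ℝ (Fin N), ‖x‖ < 1 → u x = 0 := by
    intro x hx; rw [hu]; simp [le_of_lt hx]
  have hu1 : ∀ x : EuclideanSpace ℝ (Fin N), 1 < ‖x‖ → u x = 1 := by
    intro x hx; rw [hu]; simp [not_le.mpr hx]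
  refine ⟨?_, ?_, ?_⟩
  · intro x hx
    have hzero : ∀ y ∈ Kᶜ, J (x - y) * (u y - u x) = 0 := by
      intro y hy
      by_cases hJ : J (x - y) = 0
      · rw [hJ, zero_mul]
      · have hxy : ‖x - y‖ < 1/2 := by
          have := hJsupp (Function.mem_support.mpr hJ)
          simpa [mem_ball, dist_zero_right] using this
        rcases hdich x hx with hx1 | hx2
        · have hy1 : ‖y‖ < 3/2 := by
            have : ‖y‖ - ‖x‖ ≤ ‖y - x‖ := norm_sub_norm_le y x
            rw [norm_sub_rev] at hxy
            linarith
          rcases hdich y hy with hy2 | hy2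
          · rw [hu0 x hx1, hu0 y hy2]; ring
          · linarith
        · have hy1 : 3/2 < ‖y‖ := by
            have : ‖x‖ - ‖y‖ ≤ ‖x - y‖ := norm_sub_norm_le x y
            linarith
          rw [hu1 x (by linarith), hu1 y (by linarith)]; ring
    rw [setIntegral_eq_zero_of_forall_eq_zero hzero, zero_add]
    rcases hdich x hx with h | h
    · rw [hu0 x h, hf0]
    · rw [hu1 x (by linarith), hf1]
  · have hev : ∀ᶠ x in cocompact (EuclideanSpace ℝ (Fin N)), u x = 1 := by
      have hmem : (closedBall (0 : EuclideanSpace ℝ (Fin N)) 1)ᶜ ∈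
          cocompact (EuclideanSpace ℝ (Fin N)) :=
        (isCompact_closedBall _ _).compl_mem_cocompact
      filter_upwards [hmem] with x hx
      apply hu1
      simpa [mem_closedBall, dist_zero_right] using hx
    exact Tendsto.congr' (Filter.EventuallyEq.symm (hev : u =ᶠ[cocompact _] fun _ => (1:ℝ))) tendsto_const_nhds
  · intro h
    have h0 : (0 : EuclideanSpace ℝ (Fin N)) ∈ Kᶜ := by
      intro hc
      exact (hK1 hc) (by simp [mem_ball])
    have := h 0 h0
    rw [hu0 0 (by simp)] at this
    norm_num at this
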